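/- There exists a constant L_f > 0, depending only on L₀, L₁, L₂ and μ_g, such that the composite function x ↦ f(x, y*(x)) is differentiable with L_f-Lipschitz gradient on E. -/

import Mathlib

open RealInnerProductSpace

/-- Partial gradient in the first variable of a real-valued function on `E × F`. -/
noncomputable def gradX {E F : Type*}
    [NormedAddCommGroup E] [InnerProductSpace ℝ E] [CompleteSpace E]
    [NormedAddCommGroup F] [InnerProductSpace ℝ F] [CompleteSpace F]
    (f : E → F → ℝ) (x : E) (y : F) : E :=
  gradient (fun u => f u y) x

/-- Partial gradient in the second variable of a real-valued function on `E × F`. -/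
noncomputable def gradY {E F : Type*}
    [NormedAddCommGroup E] [InnerProductSpace ℝ E] [CompleteSpace E]
    [NormedAddCommGroup F] [InnerProductSpace ℝ F] [CompleteSpace F]
    (f : E → F → ℝ) (x : E) (y : F) : F :=
  gradient (fun v => f x v) y

/-- The mixed second derivative `∇ₓ∇_y g (x,y) : F →L[ℝ] E`. -/
noncomputable def mixedD {E F : Type*}
    [NormedAddCommGroup E] [InnerProductSpace ℝ E] [CompleteSpace E]
    [NormedAddCommGroup F] [InnerProductSpace ℝ F] [CompleteSpace F]
    (g : E → F → ℝ) (x : E) (y : F) : F →L[ℝ] E :=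
  ContinuousLinearMap.adjoint (fderiv ℝ (fun u => gradY g u y) x)

/-- The Hessian `∇_y² g (x,y) : F →L[ℝ] F` of `g(x,·)` at `y`. -/
noncomputable def hessY {E F : Type*}
    [NormedAddCommGroup E] [InnerProductSpace ℝ E] [CompleteSpace E]
    [NormedAddCommGroup F] [InnerProductSpace ℝ F] [CompleteSpace F]
    (g : E → F → ℝ) (x : E) (y : F) : F →L[ℝ] F :=
  fderiv ℝ (fun v => gradY g x v) y

section MyAux

set_option linter.unusedSectionVars false

variable {E F : Type*}
    [NormedAddCommGroup E] [InnerProductSpace ℝ E] [CompleteSpace E]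
    [NormedAddCommGroup F] [InnerProductSpace ℝ F] [CompleteSpace F]

theorem my_sq_le {a b : ℝ} (hb : 0 ≤ b) (h : a ^ 2 ≤ b ^ 2) : a ≤ b := by
  nlinarith [sq_nonneg (a - b), sq_nonneg (a + b)]

theorem my_inner_gradient_eq (φ : E → ℝ) (x h : E) :
    ⟪gradient φ x, h⟫ = fderiv ℝ φ x h := by
  rw [gradient, InnerProductSpace.toDual_symm_apply]

theorem my_norm_gradient_eq (φ : E → ℝ) (x : E) :
    ‖gradient φ x‖ = ‖fderiv ℝ φ x‖ := by
  rw [gradient]; exact LinearIsometryEquiv.norm_map _ _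

theorem my_hasFDerivAt_of_isLittleO {G : Type*} [NormedAddCommGroup G] [NormedSpace ℝ G]
    {f : E → G} {f' : E →L[ℝ] G} {x : E}
    (h : (fun u => f u - f x - f' (u - x)) =o[nhds x] fun u => u - x) :
    HasFDerivAt f f' x := by
  rw [hasFDerivAt_iff_isLittleO_nhds_zero]
  have ht : Filter.Tendsto (fun h : E => x + h) (nhds 0) (nhds x) := by
    simpa using (continuous_add_left x).tendsto (0 : E)
  have h2 := h.comp_tendsto ht
  simpa [Function.comp_def] using h2

/-- coercivity of the derivative of a strongly monotone map -/
theorem my_coercive {Φx : F → F} {H : F →L[ℝ] F} {y : F} (hH : HasFDerivAt Φx H y)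
    {μ : ℝ} (hmono : ∀ w, μ * ‖w - y‖ ^ 2 ≤ ⟪Φx w - Φx y, w - y⟫) (v : F) :
    μ * ‖v‖ ^ 2 ≤ ⟪H v, v⟫ := by
  have hc : HasDerivAt (fun t : ℝ => y + t • v) v 0 := by
    simpa using ((hasDerivAt_id (0 : ℝ)).smul_const v).const_add y
  have hH' : HasFDerivAt Φx H (y + (0 : ℝ) • v) := by simpa using hH
  have hΦc : HasDerivAt (fun t : ℝ => Φx (y + t • v)) (H v) 0 :=
    hH'.comp_hasDerivAt (0 : ℝ) hc
  have hψ : HasDerivAt (fun t : ℝ => ⟪v, Φx (y + t • v)⟫) ⟪v, H v⟫ 0 := by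
    have := (innerSL ℝ v).hasFDerivAt.comp_hasDerivAt (0 : ℝ) hΦc
    simpa [Function.comp_def] using this
  rw [hasDerivAt_iff_tendsto_slope] at hψ
  have hψ' : Filter.Tendsto (slope (fun t : ℝ => ⟪v, Φx (y + t • v)⟫) 0)
      (nhdsWithin 0 (Set.Ioi (0 : ℝ))) (nhds ⟪v, H v⟫) :=
    hψ.mono_left (nhdsWithin_mono 0 (fun t ht => ne_of_gt ht))
  have hbound : ∀ t ∈ Set.Ioi (0 : ℝ),
      μ * ‖v‖ ^ 2 ≤ slope (fun t : ℝ => ⟪v, Φx (y + t • v)⟫) 0 t := by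
    intro t ht
    have ht' : (0 : ℝ) < t := ht
    have h1 := hmono (y + t • v)
    have e1 : y + t • v - y = t • v := by abel
    rw [e1] at h1
    have e2 : ‖t • v‖ ^ 2 = t ^ 2 * ‖v‖ ^ 2 := by
      rw [norm_smul]; rw [Real.norm_eq_abs]; ring_nf; rw [sq_abs]; ring
    have e3 : ⟪Φx (y + t • v) - Φx y, t • v⟫ = t * ⟪Φx (y + t • v) - Φx y, v⟫ :=
      real_inner_smul_right _ _ _
    rw [e2, e3] at h1
    have e4 : ⟪v, Φx (y + t • v)⟫ - ⟪v, Φx (y + (0 : ℝ) • v)⟫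
        = ⟪Φx (y + t • v) - Φx y, v⟫ := by
      simp only [zero_smul, add_zero, inner_sub_left]
      rw [real_inner_comm (Φx (y + t • v)) v, real_inner_comm (Φx y) v]
    rw [slope_def_field, sub_zero, e4, le_div_iff₀ ht']
    nlinarith
  have := ge_of_tendsto hψ' ((eventually_nhdsWithin_of_forall hbound))
  rw [real_inner_comm] at this
  exact this

/-- a coercive operator on a finite-dimensional space has a bounded inverse -/
theorem my_inverse {μ : ℝ} (hμ : 0 < μ) [FiniteDimensional ℝ F] (T : F →L[ℝ] F)
    (hc : ∀ v, μ * ‖v‖ ^ 2 ≤ ⟪T v, v⟫) :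
    ∃ S : F →L[ℝ] F, S.comp T = ContinuousLinearMap.id ℝ F ∧
      T.comp S = ContinuousLinearMap.id ℝ F ∧ ‖S‖ ≤ 1 / μ := by
  have hker : ∀ v, T v = 0 → v = 0 := by
    intro v hv
    have := hc v
    rw [hv] at this
    simp only [inner_zero_left] at this
    have : ‖v‖ ^ 2 ≤ 0 := by nlinarith
    have : ‖v‖ = 0 := by nlinarith [sq_nonneg ‖v‖, norm_nonneg v]
    exact norm_eq_zero.mp this
  have hinj : Function.Injective T := by
    intro a b hab
    have : T (a - b) = 0 := by rw [map_sub, hab, sub_self]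
    have := hker _ this
    exact sub_eq_zero.mp this
  have hsurj : Function.Surjective T := by
    have hinj' : Function.Injective (T : F →ₗ[ℝ] F) := hinj
    exact LinearMap.injective_iff_surjective.mp hinj'
  let e : F ≃ₗ[ℝ] F := LinearEquiv.ofBijective (T : F →ₗ[ℝ] F) ⟨hinj, hsurj⟩
  let S : F →L[ℝ] F := LinearMap.toContinuousLinearMap (e.symm : F →ₗ[ℝ] F)
  have hST : ∀ v, S (T v) = v := fun v => e.symm_apply_apply v
  have hTS : ∀ w, T (S w) = w := fun w => e.apply_symm_apply w
  refine ⟨S, by ext v; exact hST v, by ext w; exact hTS w, ?_⟩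
  refine S.opNorm_le_bound (by positivity) (fun w => ?_)
  by_cases hw : S w = 0
  · rw [hw, norm_zero]; positivity
  · have hc' := hc (S w)
    rw [hTS w] at hc'
    have h2 : ⟪w, S w⟫ ≤ ‖w‖ * ‖S w‖ := real_inner_le_norm _ _
    have h3 : 0 < ‖S w‖ := norm_pos_iff.mpr hw
    rw [div_mul_eq_mul_div, le_div_iff₀ hμ]
    nlinarith

theorem my_fderiv_joint_apply (f : E → F → ℝ) (x : E) (y : F)
    (hf : DifferentiableAt ℝ (fun p : E × F => f p.1 p.2) (x, y)) (h : E) (k : F) :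
    fderiv ℝ (fun p : E × F => f p.1 p.2) (x, y) (h, k)
      = ⟪gradX f x y, h⟫ + ⟪gradY f x y, k⟫ := by
  have hx : HasFDerivAt (fun u => f u y)
      ((fderiv ℝ (fun p : E × F => f p.1 p.2) (x, y)).comp (ContinuousLinearMap.inl ℝ E F)) x :=
    (hf.hasFDerivAt.comp x (hasFDerivAt_prodMk_left (𝕜 := ℝ) x y) :)
  have hy : HasFDerivAt (fun v => f x v)
      ((fderiv ℝ (fun p : E × F => f p.1 p.2) (x, y)).comp (ContinuousLinearMap.inr ℝ E F)) y :=
    hf.hasFDerivAt.comp y (hasFDerivAt_prodMk_right x y)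
  rw [gradX, gradY, my_inner_gradient_eq, my_inner_gradient_eq, hx.fderiv, hy.fderiv]
  simp only [ContinuousLinearMap.comp_apply, ContinuousLinearMap.inl_apply,
    ContinuousLinearMap.inr_apply]
  rw [← map_add]
  congr 1
  simp

end MyAux

set_option maxHeartbeats 1000000 in
/-- there is a constant `L_f > 0` depending only on `L₀, L₁, L₂, μ_g`
such that, for any data satisfying the standing assumptions, the composite map
`x ↦ f(x, y*(x))` is differentiable with `L_f`-Lipschitz gradient. -/
theorem composite_smoothness
    (L₀ L₁ L₂ μg : ℝ) (hL₀ : 0 < L₀) (hL₁ : 0 < L₁) (hL₂ : 0 < L₂) (hμg : 0 < μg) :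
    ∃ Lf > (0 : ℝ), ∀ (E F : Type)
      [NormedAddCommGroup E] [InnerProductSpace ℝ E] [FiniteDimensional ℝ E]
      [NormedAddCommGroup F] [InnerProductSpace ℝ F] [FiniteDimensional ℝ F]
      (f g : E → F → ℝ) (ystar : E → F),
      (∀ x x' : E, ∀ y y' : F,
        |f x y - f x' y'| ≤ L₀ * Real.sqrt (‖x - x'‖ ^ 2 + ‖y - y'‖ ^ 2)) →
      Differentiable ℝ (fun p : E × F => f p.1 p.2) →
      (∀ x x' : E, ∀ y y' : F,
        ‖gradX f x y - gradX f x' y'‖ ^ 2 + ‖gradY f x y - gradY f x' y'‖ ^ 2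
          ≤ L₁ ^ 2 * (‖x - x'‖ ^ 2 + ‖y - y'‖ ^ 2)) →
      Differentiable ℝ (fun p : E × F => g p.1 p.2) →
      (∀ x x' : E, ∀ y y' : F,
        ‖gradX g x y - gradX g x' y'‖ ^ 2 + ‖gradY g x y - gradY g x' y'‖ ^ 2
          ≤ L₁ ^ 2 * (‖x - x'‖ ^ 2 + ‖y - y'‖ ^ 2)) →
      (∀ x : E, ∀ y y' : F,
        g x y + ⟪gradY g x y, y' - y⟫ + μg / 2 * ‖y' - y‖ ^ 2 ≤ g x y') →
      (∀ x : E, ∀ y : F, g x (ystar x) ≤ g x y) →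
      ContDiff ℝ 2 (fun p : E × F => g p.1 p.2) →
      (∀ x x' : E, ∀ y y' : F,
        ‖mixedD g x y - mixedD g x' y'‖ ≤ L₂ * Real.sqrt (‖x - x'‖ ^ 2 + ‖y - y'‖ ^ 2)) →
      (∀ x x' : E, ∀ y y' : F,
        ‖hessY g x y - hessY g x' y'‖ ≤ L₂ * Real.sqrt (‖x - x'‖ ^ 2 + ‖y - y'‖ ^ 2)) →
      Differentiable ℝ (fun x : E => f x (ystar x)) ∧
        ∀ x x' : E,
          ‖gradient (fun u : E => f u (ystar u)) x - gradient (fun u : E => f u (ystar u)) x'‖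
            ≤ Lf * ‖x - x'‖ := by
  
  refine ⟨(1 + L₁ / μg) * ((1 + L₁ / μg) * (L₁ + L₀ * L₂ / μg)), by positivity, ?_⟩
  intro E F _ _ _ _ _ _ f g ystar hfLip hfDiff hfGrad hgDiff hgGrad hgSC hgMin hgC2 hMixed hHess
  have hκ : 0 < L₁ / μg := by positivity
  set κ : ℝ := L₁ / μg with hκdef
  set c : ℝ := 1 + κ with hcdef
  have hc0 : 0 < c := by positivity
  -- first-order optimality
  have hy0 : ∀ x : E, gradY g x (ystar x) = 0 := by
    intro x
    have hmin : IsLocalMin (fun v => g x v) (ystar x) := Filter.Eventually.of_forall (hgMin x)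
    have h0 : fderiv ℝ (fun v => g x v) (ystar x) = 0 := hmin.fderiv_eq_zero
    rw [gradY, gradient, h0, map_zero]
  -- strong monotonicity of gradY g x
  have hmono : ∀ (x : E) (y y' : F),
      μg * ‖y' - y‖ ^ 2 ≤ ⟪gradY g x y' - gradY g x y, y' - y⟫ := by
    intro x y y'
    have h1 := hgSC x y y'
    have h2 := hgSC x y' y
    have e2 : ‖y - y'‖ = ‖y' - y‖ := norm_sub_rev _ _
    have e1 : ⟪gradY g x y', y - y'⟫ = -⟪gradY g x y', y' - y⟫ := by
      rw [← inner_neg_right]; congr 1; abel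
    rw [e2, e1] at h2
    rw [inner_sub_left]
    linarith
  -- single-variable Lipschitz bound for gradY g in x
  have hgY : ∀ (x x' : E) (y : F), ‖gradY g x y - gradY g x' y‖ ≤ L₁ * ‖x - x'‖ := by
    intro x x' y
    have h := hgGrad x x' y y
    rw [sub_self, norm_zero] at h
    refine my_sq_le (by positivity) ?_
    nlinarith [sq_nonneg ‖gradX g x y - gradX g x' y‖]
  -- ystar is Lipschitz
  have hyLip : ∀ x x' : E, ‖ystar x - ystar x'‖ ≤ κ * ‖x - x'‖ := by
    intro x x'
    by_cases hz : ystar x = ystar x'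
    · rw [hz, sub_self, norm_zero]; positivity
    · have h1 := hmono x' (ystar x') (ystar x)
      rw [hy0 x', sub_zero] at h1
      have h2 : ⟪gradY g x' (ystar x), ystar x - ystar x'⟫
          = ⟪gradY g x' (ystar x) - gradY g x (ystar x), ystar x - ystar x'⟫ := by
        rw [hy0 x, sub_zero]
      rw [h2] at h1
      have h3 := hgY x' x (ystar x)
      have h4 := real_inner_le_norm (gradY g x' (ystar x) - gradY g x (ystar x))
        (ystar x - ystar x')
      have h5 : 0 < ‖ystar x - ystar x'‖ := norm_pos_iff.mpr (sub_ne_zero.mpr hz)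
      have h6 : ‖x' - x‖ = ‖x - x'‖ := norm_sub_rev _ _
      rw [h6] at h3
      rw [hκdef, div_mul_eq_mul_div, le_div_iff₀ hμg]
      nlinarith [mul_le_mul_of_nonneg_right h3 (norm_nonneg (ystar x - ystar x'))]
  have hsum : ∀ x x' : E, ‖x - x'‖ ^ 2 + ‖ystar x - ystar x'‖ ^ 2 ≤ (c * ‖x - x'‖) ^ 2 := by
    intro x x'
    have h := hyLip x x'
    have h0 := norm_nonneg (x - x')
    have h1 := norm_nonneg (ystar x - ystar x')
    rw [hcdef]
    nlinarith [mul_self_le_mul_self h1 h, hκ.le]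
  have hsq : ∀ x x' : E, Real.sqrt (‖x - x'‖ ^ 2 + ‖ystar x - ystar x'‖ ^ 2) ≤ c * ‖x - x'‖ := by
    intro x x'
    have h := Real.sqrt_le_sqrt (hsum x x')
    rwa [Real.sqrt_sq (by positivity)] at h
  -- gradient of f bounded by L₀
  have hfDy : ∀ (x : E) (y : F), DifferentiableAt ℝ (fun v => f x v) y := fun x y =>
    (hfDiff (x, y)).comp y (DifferentiableAt.prodMk (differentiableAt_const x) differentiableAt_id)
  have hwb : ∀ (x : E) (y : F), ‖gradY f x y‖ ≤ L₀ := by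
    intro x y
    have hb : ∀ v : F, ‖f x v - f x y‖ ≤ L₀ * ‖v - y‖ := by
      intro v
      have h := hfLip x x v y
      rw [sub_self, norm_zero] at h
      rw [Real.norm_eq_abs]
      calc |f x v - f x y| ≤ L₀ * Real.sqrt ((0:ℝ) ^ 2 + ‖v - y‖ ^ 2) := h
        _ = L₀ * ‖v - y‖ := by
            rw [show (0:ℝ) ^ 2 + ‖v - y‖ ^ 2 = ‖v - y‖ ^ 2 by ring,
              Real.sqrt_sq (norm_nonneg _)]
    have hfd := (hfDy x y).hasFDerivAt
    have h := hfd.le_of_lip' hL₀.le (Filter.Eventually.of_forall hb)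
    rw [gradY, my_norm_gradient_eq]
    exact h
  -- Lipschitz bounds for gradX f, gradY f along the path
  have hfX : ∀ x x' : E,
      ‖gradX f x (ystar x) - gradX f x' (ystar x')‖ ≤ L₁ * (c * ‖x - x'‖) := by
    intro x x'
    have h := hfGrad x x' (ystar x) (ystar x')
    have h2 := hsum x x'
    refine my_sq_le (by positivity) ?_
    nlinarith [sq_nonneg ‖gradY f x (ystar x) - gradY f x' (ystar x')‖,
      mul_le_mul_of_nonneg_left h2 (sq_nonneg L₁)]
  have hfY : ∀ x x' : E,
      ‖gradY f x (ystar x) - gradY f x' (ystar x')‖ ≤ L₁ * (c * ‖x - x'‖) := by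
    intro x x'
    have h := hfGrad x x' (ystar x) (ystar x')
    have h2 := hsum x x'
    refine my_sq_le (by positivity) ?_
    nlinarith [sq_nonneg ‖gradX f x (ystar x) - gradX f x' (ystar x')‖,
      mul_le_mul_of_nonneg_left h2 (sq_nonneg L₁)]
  -- smoothness of the map Φ : (x,y) ↦ gradY g x y
  have hgradYfd : ∀ (x : E) (y : F), fderiv ℝ (fun v : F => g x v) y
      = ((fderiv ℝ (fun p : E × F => g p.1 p.2) (x, y)).comp (ContinuousLinearMap.inr ℝ E F)) :=
    fun x y => ((hgDiff (x, y)).hasFDerivAt.comp y (hasFDerivAt_prodMk_right x y)).fderiv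
  have hΦeq : (fun p : E × F => gradY g p.1 p.2)
      = fun p : E × F => (InnerProductSpace.toDual ℝ F).symm
          ((fderiv ℝ (fun p : E × F => g p.1 p.2) p).comp (ContinuousLinearMap.inr ℝ E F)) := by
    funext p
    obtain ⟨x, y⟩ := p
    rw [gradY, gradient, hgradYfd x y]
  have hΦcd : ContDiff ℝ 1 (fun p : E × F => gradY g p.1 p.2) := by
    rw [hΦeq]
    have h1 : ContDiff ℝ 1 (fderiv ℝ (fun p : E × F => g p.1 p.2)) :=
      hgC2.fderiv_right (by norm_num)
    have h2 : ContDiff ℝ 1 (fun p : E × F =>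
        (fderiv ℝ (fun p : E × F => g p.1 p.2) p).comp (ContinuousLinearMap.inr ℝ E F)) :=
      h1.clm_comp contDiff_const
    exact ((InnerProductSpace.toDual ℝ F).symm.contDiff).comp h2
  have hΦdiff : Differentiable ℝ (fun p : E × F => gradY g p.1 p.2) :=
    hΦcd.differentiable one_ne_zero
  -- partial derivatives of Φ
  have hBx : ∀ (x : E) (y : F), HasFDerivAt (fun u => gradY g u y)
      ((fderiv ℝ (fun p : E × F => gradY g p.1 p.2) (x, y)).comp
        (ContinuousLinearMap.inl ℝ E F)) x :=
    fun x y => ((hΦdiff (x, y)).hasFDerivAt.comp x (hasFDerivAt_prodMk_left (𝕜 := ℝ) x y) :)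
  have hHx : ∀ (x : E) (y : F), HasFDerivAt (fun v => gradY g x v)
      ((fderiv ℝ (fun p : E × F => gradY g p.1 p.2) (x, y)).comp
        (ContinuousLinearMap.inr ℝ E F)) y :=
    fun x y => (hΦdiff (x, y)).hasFDerivAt.comp y (hasFDerivAt_prodMk_right x y)
  have hBdef : ∀ (x : E) (y : F), fderiv ℝ (fun u => gradY g u y) x
      = (fderiv ℝ (fun p : E × F => gradY g p.1 p.2) (x, y)).comp
          (ContinuousLinearMap.inl ℝ E F) :=
    fun x y => (hBx x y).fderiv
  have hHdef : ∀ (x : E) (y : F), hessY g x y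
      = (fderiv ℝ (fun p : E × F => gradY g p.1 p.2) (x, y)).comp
          (ContinuousLinearMap.inr ℝ E F) := by
    intro x y
    rw [hessY]
    exact (hHx x y).fderiv
  have hHess' : ∀ (x : E) (y : F), HasFDerivAt (fun v => gradY g x v) (hessY g x y) y := by
    intro x y
    rw [hHdef x y]
    exact hHx x y
  -- coercivity and inverse of the Hessian
  have hcoer : ∀ x : E, ∀ v : F, μg * ‖v‖ ^ 2 ≤ ⟪hessY g x (ystar x) v, v⟫ := fun x =>
    my_coercive (hHess' x (ystar x)) (fun w => hmono x (ystar x) w)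
  choose S hS1 hS2 hS3 using fun x : E => my_inverse hμg (hessY g x (ystar x)) (hcoer x)
  -- bound on the mixed block
  have hBnorm : ∀ x : E, ‖fderiv ℝ (fun u => gradY g u (ystar x)) x‖ ≤ L₁ := by
    intro x
    have hfd : HasFDerivAt (fun u => gradY g u (ystar x))
        (fderiv ℝ (fun u => gradY g u (ystar x)) x) x :=
      ((hBx x (ystar x)).differentiableAt).hasFDerivAt
    exact hfd.le_of_lip' hL₁.le (Filter.Eventually.of_forall (fun u => hgY u x (ystar x)))
  have hBadj : ∀ x : E, ContinuousLinearMap.adjoint (mixedD g x (ystar x))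
      = fderiv ℝ (fun u => gradY g u (ystar x)) x := by
    intro x
    rw [mixedD, ContinuousLinearMap.adjoint_adjoint]
  have hBlip : ∀ x x' : E, ‖fderiv ℝ (fun u => gradY g u (ystar x)) x
      - fderiv ℝ (fun u => gradY g u (ystar x')) x'‖ ≤ L₂ * (c * ‖x - x'‖) := by
    intro x x'
    rw [← hBadj x, ← hBadj x', ← map_sub, LinearIsometryEquiv.norm_map]
    calc ‖mixedD g x (ystar x) - mixedD g x' (ystar x')‖
        ≤ L₂ * Real.sqrt (‖x - x'‖ ^ 2 + ‖ystar x - ystar x'‖ ^ 2) := hMixed x x' _ _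
      _ ≤ L₂ * (c * ‖x - x'‖) := mul_le_mul_of_nonneg_left (hsq x x') hL₂.le
  have hHlip : ∀ x x' : E,
      ‖hessY g x (ystar x) - hessY g x' (ystar x')‖ ≤ L₂ * (c * ‖x - x'‖) := fun x x' =>
    (hHess x x' _ _).trans (mul_le_mul_of_nonneg_left (hsq x x') hL₂.le)
  -- Lipschitz property of the inverse Hessian
  have hSid : ∀ x x' : E, S x - S x'
      = (S x).comp ((hessY g x' (ystar x') - hessY g x (ystar x)).comp (S x')) := by
    intro x x'
    have e1 : (hessY g x' (ystar x') - hessY g x (ystar x)).comp (S x')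
        = ContinuousLinearMap.id ℝ F - (hessY g x (ystar x)).comp (S x') := by
      rw [ContinuousLinearMap.sub_comp, hS2 x']
    rw [e1, ContinuousLinearMap.comp_sub, ContinuousLinearMap.comp_id,
      ← ContinuousLinearMap.comp_assoc, hS1 x, ContinuousLinearMap.id_comp]
  have hSlip : ∀ x x' : E,
      ‖S x - S x'‖ ≤ (1 / μg) * ((L₂ * (c * ‖x - x'‖)) * (1 / μg)) := by
    intro x x'
    rw [hSid x x']
    have h3 : ‖hessY g x' (ystar x') - hessY g x (ystar x)‖ ≤ L₂ * (c * ‖x - x'‖) := by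
      have h := hHlip x' x
      rwa [norm_sub_rev (x':E) x] at h
    calc ‖(S x).comp ((hessY g x' (ystar x') - hessY g x (ystar x)).comp (S x'))‖
        ≤ ‖S x‖ * ‖(hessY g x' (ystar x') - hessY g x (ystar x)).comp (S x')‖ :=
          ContinuousLinearMap.opNorm_comp_le _ _
      _ ≤ ‖S x‖ * (‖hessY g x' (ystar x') - hessY g x (ystar x)‖ * ‖S x'‖) :=
          mul_le_mul_of_nonneg_left (ContinuousLinearMap.opNorm_comp_le _ _) (norm_nonneg _)
      _ ≤ (1 / μg) * ((L₂ * (c * ‖x - x'‖)) * (1 / μg)) :=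
          mul_le_mul (hS3 x) (mul_le_mul h3 (hS3 x') (norm_nonneg _) (by positivity))
            (by positivity) (by positivity)
  -- differentiability of ystar
  have hystarD : ∀ x : E, HasFDerivAt ystar
      (-((S x).comp (fderiv ℝ (fun u => gradY g u (ystar x)) x))) x := by
    intro x
    apply my_hasFDerivAt_of_isLittleO
    have hAd : HasFDerivAt (fun p : E × F => gradY g p.1 p.2)
        (fderiv ℝ (fun p : E × F => gradY g p.1 p.2) (x, ystar x)) (x, ystar x) :=
      (hΦdiff (x, ystar x)).hasFDerivAt
    have hAo := hAd.isLittleO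
    have hyc : Continuous ystar := by
      have hl : LipschitzWith (Real.toNNReal κ) ystar := by
        apply LipschitzWith.of_dist_le_mul
        intro a b
        rw [dist_eq_norm, dist_eq_norm]
        calc ‖ystar a - ystar b‖ ≤ κ * ‖a - b‖ := hyLip a b
          _ = (Real.toNNReal κ) * ‖a - b‖ := by rw [Real.coe_toNNReal κ hκ.le]
      exact hl.continuous
    have hqt : Filter.Tendsto (fun u : E => (u, ystar u)) (nhds x) (nhds (x, ystar x)) :=
      (continuous_id.prodMk hyc).tendsto x
    have step1 := hAo.comp_tendsto hqt
    have step2 : (fun u : E => (u, ystar u) - (x, ystar x)) =O[nhds x] (fun u => u - x) := by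
      apply Asymptotics.IsBigO.of_bound c
      apply Filter.Eventually.of_forall
      intro u
      have e0 : ((u, ystar u) - (x, ystar x) : E × F) = (u - x, ystar u - ystar x) := rfl
      rw [e0, Prod.norm_def]
      apply max_le
      · have := norm_nonneg (u - x)
        show ‖u - x‖ ≤ c * ‖u - x‖
        nlinarith [hκ.le]
      · show ‖ystar u - ystar x‖ ≤ c * ‖u - x‖
        calc ‖ystar u - ystar x‖ ≤ κ * ‖u - x‖ := hyLip u x
          _ ≤ c * ‖u - x‖ := by nlinarith [norm_nonneg (u - x)]
    have step3 : (fun u : E => (fderiv ℝ (fun p : E × F => gradY g p.1 p.2) (x, ystar x))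
        ((u, ystar u) - (x, ystar x))) =o[nhds x] (fun u => u - x) := by
      have h := step1.trans_isBigO step2
      have heq : ((fun q : E × F => gradY g q.1 q.2 - gradY g (x, ystar x).1 (x, ystar x).2
          - (fderiv ℝ (fun p : E × F => gradY g p.1 p.2) (x, ystar x)) (q - (x, ystar x)))
            ∘ (fun u : E => (u, ystar u)))
          = fun u : E => -((fderiv ℝ (fun p : E × F => gradY g p.1 p.2) (x, ystar x))
              ((u, ystar u) - (x, ystar x))) := by
        funext u
        show gradY g u (ystar u) - gradY g x (ystar x) - _ = _
        rw [hy0 u, hy0 x]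
        simp
      rw [heq] at h
      have h2 := h.neg_left
      simpa using h2
    have htarget : (fun u : E => ystar u - ystar x
        - (-((S x).comp (fderiv ℝ (fun u => gradY g u (ystar x)) x))) (u - x))
        = fun u : E => (S x) ((fderiv ℝ (fun p : E × F => gradY g p.1 p.2) (x, ystar x))
            ((u, ystar u) - (x, ystar x))) := by
      funext u
      have hAapp : (fderiv ℝ (fun p : E × F => gradY g p.1 p.2) (x, ystar x))
          ((u, ystar u) - (x, ystar x))
          = (fderiv ℝ (fun w => gradY g w (ystar x)) x) (u - x)
            + (hessY g x (ystar x)) (ystar u - ystar x) := by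
        have e0 : ((u, ystar u) - (x, ystar x) : E × F) = (u - x, ystar u - ystar x) := rfl
        have e1 : ((u - x, ystar u - ystar x) : E × F)
            = ((u - x, 0) : E × F) + ((0, ystar u - ystar x) : E × F) := by simp
        rw [e0, e1, map_add, hBdef x (ystar x), hHdef x (ystar x)]
        rfl
      rw [hAapp, map_add]
      have e2 : (S x) ((hessY g x (ystar x)) (ystar u - ystar x)) = ystar u - ystar x := by
        have h := ContinuousLinearMap.ext_iff.mp (hS1 x) (ystar u - ystar x)
        simpa using h
      rw [e2]
      simp only [ContinuousLinearMap.neg_apply, ContinuousLinearMap.comp_apply]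
      abel
    rw [htarget]
    exact (((S x).isBigO_comp _ _).trans_isLittleO step3)
  -- norm bound on the derivative of ystar
  have hDnorm : ∀ x : E,
      ‖(S x).comp (fderiv ℝ (fun u => gradY g u (ystar x)) x)‖ ≤ κ := by
    intro x
    calc ‖(S x).comp (fderiv ℝ (fun u => gradY g u (ystar x)) x)‖
        ≤ ‖S x‖ * ‖fderiv ℝ (fun u => gradY g u (ystar x)) x‖ :=
          ContinuousLinearMap.opNorm_comp_le _ _
      _ ≤ (1 / μg) * L₁ := mul_le_mul (hS3 x) (hBnorm x) (norm_nonneg _) (by positivity)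
      _ = κ := by rw [hκdef]; ring
  -- the gradient of the composite map
  have hG : ∀ x : E, HasGradientAt (fun u : E => f u (ystar u))
      (gradX f x (ystar x) + (ContinuousLinearMap.adjoint
        (-((S x).comp (fderiv ℝ (fun u => gradY g u (ystar x)) x))))
          (gradY f x (ystar x))) x := by
    intro x
    have hq : HasFDerivAt (fun u : E => (u, ystar u))
        ((ContinuousLinearMap.id ℝ E).prod
          (-((S x).comp (fderiv ℝ (fun u => gradY g u (ystar x)) x)))) x :=
      HasFDerivAt.prodMk (hasFDerivAt_id x) (hystarD x)
    have hcomp : HasFDerivAt (fun u : E => f u (ystar u))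
        ((fderiv ℝ (fun p : E × F => f p.1 p.2) (x, ystar x)).comp
          ((ContinuousLinearMap.id ℝ E).prod
            (-((S x).comp (fderiv ℝ (fun u => gradY g u (ystar x)) x))))) x :=
      ((hfDiff (x, ystar x)).hasFDerivAt.comp x hq :)
    have hg2 := hasFDerivAt_iff_hasGradientAt.mp hcomp
    convert hg2 using 1
    apply ext_inner_right ℝ
    intro h
    rw [InnerProductSpace.toDual_symm_apply]
    rw [inner_add_left, ContinuousLinearMap.adjoint_inner_left]
    rw [ContinuousLinearMap.comp_apply]
    have e1 : ((ContinuousLinearMap.id ℝ E).prod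
        (-((S x).comp (fderiv ℝ (fun u => gradY g u (ystar x)) x)))) h
        = (h, (-((S x).comp (fderiv ℝ (fun u => gradY g u (ystar x)) x))) h) := rfl
    rw [e1, my_fderiv_joint_apply f x (ystar x) (hfDiff (x, ystar x)) h _]
  have hdiff : Differentiable ℝ (fun x : E => f x (ystar x)) := fun x =>
    (hG x).differentiableAt
  refine ⟨hdiff, ?_⟩
  intro x x'
  rw [(hG x).gradient, (hG x').gradient]
  -- final Lipschitz estimate
  have hDl : ‖(S x).comp (fderiv ℝ (fun u => gradY g u (ystar x)) x)
      - (S x').comp (fderiv ℝ (fun u => gradY g u (ystar x')) x')‖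
      ≤ (1 / μg) * (L₂ * (c * ‖x - x'‖))
        + ((1 / μg) * ((L₂ * (c * ‖x - x'‖)) * (1 / μg))) * L₁ := by
    have e : (S x).comp (fderiv ℝ (fun u => gradY g u (ystar x)) x)
        - (S x').comp (fderiv ℝ (fun u => gradY g u (ystar x')) x')
        = (S x).comp (fderiv ℝ (fun u => gradY g u (ystar x)) x
            - fderiv ℝ (fun u => gradY g u (ystar x')) x')
          + (S x - S x').comp (fderiv ℝ (fun u => gradY g u (ystar x')) x') := by
      rw [ContinuousLinearMap.comp_sub, ContinuousLinearMap.sub_comp]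
      abel
    rw [e]
    calc ‖_ + _‖ ≤ ‖(S x).comp (fderiv ℝ (fun u => gradY g u (ystar x)) x
            - fderiv ℝ (fun u => gradY g u (ystar x')) x')‖
          + ‖(S x - S x').comp (fderiv ℝ (fun u => gradY g u (ystar x')) x')‖ :=
        norm_add_le _ _
      _ ≤ ‖S x‖ * ‖fderiv ℝ (fun u => gradY g u (ystar x)) x
            - fderiv ℝ (fun u => gradY g u (ystar x')) x'‖
          + ‖S x - S x'‖ * ‖fderiv ℝ (fun u => gradY g u (ystar x')) x'‖ :=
        add_le_add (ContinuousLinearMap.opNorm_comp_le _ _)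
          (ContinuousLinearMap.opNorm_comp_le _ _)
      _ ≤ (1 / μg) * (L₂ * (c * ‖x - x'‖))
          + ((1 / μg) * ((L₂ * (c * ‖x - x'‖)) * (1 / μg))) * L₁ :=
        add_le_add (mul_le_mul (hS3 x) (hBlip x x') (norm_nonneg _) (by positivity))
          (mul_le_mul (hSlip x x') (hBnorm x') (norm_nonneg _) (by positivity))
  have key : ‖(gradX f x (ystar x) + (ContinuousLinearMap.adjoint
        (-((S x).comp (fderiv ℝ (fun u => gradY g u (ystar x)) x))))
          (gradY f x (ystar x)))
      - (gradX f x' (ystar x') + (ContinuousLinearMap.adjoint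
        (-((S x').comp (fderiv ℝ (fun u => gradY g u (ystar x')) x'))))
          (gradY f x' (ystar x')))‖
      ≤ L₁ * (c * ‖x - x'‖) + (κ * (L₁ * (c * ‖x - x'‖))
          + ((1 / μg) * (L₂ * (c * ‖x - x'‖))
            + ((1 / μg) * ((L₂ * (c * ‖x - x'‖)) * (1 / μg))) * L₁) * L₀) := by
    set Dx := -((S x).comp (fderiv ℝ (fun u => gradY g u (ystar x)) x)) with hDx
    set Dx' := -((S x').comp (fderiv ℝ (fun u => gradY g u (ystar x')) x')) with hDx'
    set wx := gradY f x (ystar x) with hwx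
    set wx' := gradY f x' (ystar x') with hwx'
    have e : (gradX f x (ystar x) + (ContinuousLinearMap.adjoint Dx) wx)
        - (gradX f x' (ystar x') + (ContinuousLinearMap.adjoint Dx') wx')
        = (gradX f x (ystar x) - gradX f x' (ystar x'))
          + ((ContinuousLinearMap.adjoint Dx) (wx - wx')
            + (ContinuousLinearMap.adjoint Dx - ContinuousLinearMap.adjoint Dx') wx') := by
      rw [map_sub (ContinuousLinearMap.adjoint Dx), ContinuousLinearMap.sub_apply]
      abel
    rw [e]
    have t1 : ‖(ContinuousLinearMap.adjoint Dx) (wx - wx')‖ ≤ κ * (L₁ * (c * ‖x - x'‖)) := by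
      calc ‖(ContinuousLinearMap.adjoint Dx) (wx - wx')‖
          ≤ ‖ContinuousLinearMap.adjoint Dx‖ * ‖wx - wx'‖ :=
            ContinuousLinearMap.le_opNorm _ _
        _ ≤ κ * (L₁ * (c * ‖x - x'‖)) := by
            refine mul_le_mul ?_ (hfY x x') (norm_nonneg _) hκ.le
            rw [LinearIsometryEquiv.norm_map, hDx, norm_neg]
            exact hDnorm x
    have t2 : ‖(ContinuousLinearMap.adjoint Dx - ContinuousLinearMap.adjoint Dx') wx'‖
        ≤ ((1 / μg) * (L₂ * (c * ‖x - x'‖))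
            + ((1 / μg) * ((L₂ * (c * ‖x - x'‖)) * (1 / μg))) * L₁) * L₀ := by
      calc ‖(ContinuousLinearMap.adjoint Dx - ContinuousLinearMap.adjoint Dx') wx'‖
          ≤ ‖ContinuousLinearMap.adjoint Dx - ContinuousLinearMap.adjoint Dx'‖ * ‖wx'‖ :=
            ContinuousLinearMap.le_opNorm _ _
        _ ≤ _ := by
            refine mul_le_mul ?_ (hwb x' (ystar x')) (norm_nonneg _) (by positivity)
            rw [← map_sub, LinearIsometryEquiv.norm_map, hDx, hDx']
            rw [show -((S x).comp (fderiv ℝ (fun u => gradY g u (ystar x)) x))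
                - -((S x').comp (fderiv ℝ (fun u => gradY g u (ystar x')) x'))
                = -((S x).comp (fderiv ℝ (fun u => gradY g u (ystar x)) x)
                  - (S x').comp (fderiv ℝ (fun u => gradY g u (ystar x')) x')) by abel,
              norm_neg]
            exact hDl
    calc ‖_ + _‖ ≤ ‖gradX f x (ystar x) - gradX f x' (ystar x')‖
          + ‖(ContinuousLinearMap.adjoint Dx) (wx - wx')
            + (ContinuousLinearMap.adjoint Dx - ContinuousLinearMap.adjoint Dx') wx'‖ :=
        norm_add_le _ _
      _ ≤ ‖gradX f x (ystar x) - gradX f x' (ystar x')‖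
          + (‖(ContinuousLinearMap.adjoint Dx) (wx - wx')‖
            + ‖(ContinuousLinearMap.adjoint Dx - ContinuousLinearMap.adjoint Dx') wx'‖) :=
        add_le_add le_rfl (norm_add_le _ _)
      _ ≤ L₁ * (c * ‖x - x'‖) + (κ * (L₁ * (c * ‖x - x'‖))
          + ((1 / μg) * (L₂ * (c * ‖x - x'‖))
            + ((1 / μg) * ((L₂ * (c * ‖x - x'‖)) * (1 / μg))) * L₁) * L₀) :=
        add_le_add (hfX x x') (add_le_add t1 t2)
  have final : L₁ * (c * ‖x - x'‖) + (κ * (L₁ * (c * ‖x - x'‖))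
      + ((1 / μg) * (L₂ * (c * ‖x - x'‖))
        + ((1 / μg) * ((L₂ * (c * ‖x - x'‖)) * (1 / μg))) * L₁) * L₀)
      = c * (c * (L₁ + L₀ * L₂ / μg)) * ‖x - x'‖ := by
    rw [hcdef, hκdef]
    field_simp
    ring
  rw [final] at key
  exact key
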